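/- Let {A_n}_{n≥1} be a sequence of events with P(A_n infinitely often) = 1, and let {C_n}_{n≥1} be a sequence of events, with the entire sequence {C_n} independent of the entire sequence {A_n}, such that for some n_0 and c > 0, P(C_n) ≥ c for all n > n_0. Then P(A_n ∩ C_n infinitely often) ≥ c. -/

import Mathlib

open MeasureTheory ProbabilityTheory Filter Set

/-- Klass's lemma: if `P(A_n i.o.) = 1`, the sequence of events `{C_n}` is independent of
the sequence `{A_n}`, and `P(C_n) ≥ c > 0` for all `n > n₀`, then `P(A_n ∩ C_n i.o.) ≥ c`. -/
theorem klass_lemma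
    {Ω : Type*} [m0 : MeasurableSpace Ω] (μ : Measure Ω) [IsProbabilityMeasure μ]
    (A C : ℕ → Set Ω) (hA : ∀ n, MeasurableSet (A n)) (hC : ∀ n, MeasurableSet (C n))
    (hAio : μ (limsup A atTop) = 1)
    (hindep : Indep
      (MeasurableSpace.generateFrom {s | ∃ n, s = A n})
      (MeasurableSpace.generateFrom {s | ∃ n, s = C n}) μ)
    (c : ENNReal) (hc : 0 < c) (n₀ : ℕ) (hCn : ∀ n > n₀, c ≤ μ (C n)) :
    c ≤ μ (limsup (fun n => A n ∩ C n) atTop) := by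
  set mA := MeasurableSpace.generateFrom {s : Set Ω | ∃ n, s = A n} with hmA
  have hAle : mA ≤ m0 := MeasurableSpace.generateFrom_le (by rintro s ⟨n, rfl⟩; exact hA n)
  have hmul : ∀ s t : Set Ω, MeasurableSet[mA] s →
      MeasurableSet[MeasurableSpace.generateFrom {s : Set Ω | ∃ n, s = C n}] t →
      μ (s ∩ t) = μ s * μ t := (Indep_iff _ _ _).1 hindep
  -- key estimate: for every M ≥ n₀, c ≤ μ (⋃ n, (A (M+1+n) ∩ C (M+1+n)))
  have key : ∀ M : ℕ, n₀ ≤ M → c ≤ μ (⋃ n, (A (M + 1 + n) ∩ C (M + 1 + n))) := by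
    intro M hM
    set D := disjointed (fun n => A (M + 1 + n)) with hD
    have hDmA : ∀ n, MeasurableSet[mA] (D n) :=
      MeasurableSet.disjointed (fun n => MeasurableSpace.measurableSet_generateFrom ⟨M + 1 + n, rfl⟩)
    have hDm : ∀ n, MeasurableSet[m0] (D n) := fun n => hAle _ (hDmA n)
    have hdisj : Pairwise (Function.onFun Disjoint D) := disjoint_disjointed _
    have hmulD : ∀ n, μ (D n ∩ C (M + 1 + n)) = μ (D n) * μ (C (M + 1 + n)) := fun n =>
      hmul _ _ (hDmA n) (MeasurableSpace.measurableSet_generateFrom ⟨M + 1 + n, rfl⟩)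
    have hUD : (⋃ n, D n) = ⋃ n, A (M + 1 + n) := iUnion_disjointed
    have hsub : limsup A atTop ⊆ ⋃ n, A (M + 1 + n) := by
      rw [limsup_eq_iInf_iSup_of_nat]
      refine (iInf_le _ (M + 1)).trans ?_
      refine iSup₂_le fun i hi => ?_
      have : i = M + 1 + (i - (M + 1)) := by omega
      rw [this]
      exact subset_iUnion (fun n => A (M + 1 + n)) (i - (M + 1))
    have hUD1 : μ (⋃ n, D n) = 1 := by
      rw [hUD]
      refine le_antisymm (prob_le_one) ?_
      rw [← hAio]
      exact measure_mono hsub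
    calc c = c * μ (⋃ n, D n) := by rw [hUD1, mul_one]
      _ = c * ∑' n, μ (D n) := by
          rw [measure_iUnion hdisj hDm]
      _ = ∑' n, c * μ (D n) := ENNReal.tsum_mul_left.symm
      _ ≤ ∑' n, μ (D n ∩ C (M + 1 + n)) := by
          refine ENNReal.tsum_le_tsum fun n => ?_
          rw [hmulD n, mul_comm c]
          gcongr
          exact hCn _ (by omega)
      _ = μ (⋃ n, D n ∩ C (M + 1 + n)) := by
          have hdisj2 : Pairwise (Function.onFun Disjoint fun n => D n ∩ C (M + 1 + n)) := fun i j hij =>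
            Disjoint.mono inf_le_left inf_le_left (hdisj hij)
          rw [measure_iUnion hdisj2 (fun n => (hDm n).inter (hC _))]
      _ ≤ μ (⋃ n, A (M + 1 + n) ∩ C (M + 1 + n)) := by
          refine measure_mono (iUnion_mono fun n => ?_)
          exact inter_subset_inter_left _ (disjointed_subset _ _)
  -- continuity from above
  have hlim : limsup (fun n => A n ∩ C n) atTop = ⋂ N, ⋃ i ≥ N, A i ∩ C i :=
    limsup_eq_iInf_iSup_of_nat
  rw [hlim]
  have hanti : Antitone (fun N => ⋃ i ≥ N, A i ∩ C i) := fun a b hab =>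
    biUnion_subset_biUnion_left fun i hi => hab.trans hi
  rw [hanti.measure_iInter
      (fun N => (MeasurableSet.biUnion (to_countable _)
        (fun i _ => (hA i).inter (hC i))).nullMeasurableSet)
      ⟨0, measure_ne_top μ _⟩]
  refine le_iInf fun N => ?_
  refine (key (max N n₀) (le_max_right _ _)).trans (measure_mono ?_)
  intro x hx
  obtain ⟨n, hn⟩ := mem_iUnion.1 hx
  exact mem_iUnion₂.2 ⟨max N n₀ + 1 + n, by omega, hn⟩
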